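/- arXiv:0806.0062 — 5 statements merged into one kernel-verified Lean document; each statement's English description precedes it below -/
import Mathlib

section
/- For a fixed positive integer l, the sum over all m with 1 ≤ m ≤ l and all order-preserving surjections ψ : {1,…,l} → {1,…,m} of the quantity (-1)^{l-m} · ∏_{b=1}^{m} 1/|ψ⁻¹(b)|! equals 1/l!. -/
open scoped Classical

open Finset PowerSeries

/-- Fiber cardinality of a function `Fin l → Fin m`. -/
noncomputable def fibCard {l m : ℕ} (ψ : Fin l → Fin m) (b : Fin m) : ℕ :=
  (Finset.univ.filter fun i => ψ i = b).card

lemma monotone_le_iff_lt_card {l m : ℕ} {ψ : Fin l → Fin m} (hψ : Monotone ψ)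
    (b : Fin m) (i : Fin l) :
    ψ i ≤ b ↔ (i : ℕ) < (univ.filter fun j => ψ j ≤ b).card := by
  constructor
  · intro h
    have hsub : (Finset.Iic i) ⊆ (univ.filter fun j => ψ j ≤ b) := by
      intro j hj
      simp only [Finset.mem_Iic] at hj
      simp only [mem_filter, mem_univ, true_and]
      exact le_trans (hψ hj) h
    have hcard := Finset.card_le_card hsub
    rw [Fin.card_Iic] at hcard
    omega
  · intro h
    by_contra hb
    push_neg at hb
    have hsub : (univ.filter fun j => ψ j ≤ b) ⊆ Finset.Iio i := by
      intro j hj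
      simp only [mem_filter, mem_univ, true_and] at hj
      simp only [Finset.mem_Iio]
      by_contra hji
      push_neg at hji
      exact absurd (le_trans (hψ hji) hj) (not_le.mpr hb)
    have hcard := Finset.card_le_card hsub
    rw [Fin.card_Iio] at hcard
    omega

lemma card_le_eq_sum {l m : ℕ} (ψ : Fin l → Fin m) (b : Fin m) :
    (univ.filter fun j => ψ j ≤ b).card = ∑ b' ∈ Finset.Iic b, fibCard ψ b' := by
  rw [Finset.card_eq_sum_card_fiberwise
    (f := ψ) (t := Finset.Iic b)
    (fun x hx => by simpa using (Finset.mem_filter.mp hx).2)]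
  refine Finset.sum_congr rfl fun b' hb' => ?_
  simp only [Finset.mem_Iic] at hb'
  congr 1
  ext j
  simp only [mem_filter, mem_univ, true_and, fibCard]
  constructor
  · rintro ⟨-, h⟩; exact h
  · intro h; exact ⟨h ▸ hb', h⟩

lemma monotone_eq_of_fibCard_eq {l m : ℕ} {ψ ψ' : Fin l → Fin m}
    (h : Monotone ψ) (h' : Monotone ψ')
    (hf : ∀ b, fibCard ψ b = fibCard ψ' b) : ψ = ψ' := by
  funext i
  have key : ∀ b, (ψ i ≤ b ↔ ψ' i ≤ b) := by
    intro b
    rw [monotone_le_iff_lt_card h, monotone_le_iff_lt_card h',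
      card_le_eq_sum, card_le_eq_sum]
    rw [Finset.sum_congr rfl fun b' _ => hf b']
  exact le_antisymm ((key (ψ' i)).mpr le_rfl) ((key (ψ i)).mp le_rfl)

lemma Composition.index_monotone {n : ℕ} (c : Composition n) : Monotone c.index := by
  intro j j' hle
  by_contra hlt
  push_neg at hlt
  have h1 : (j' : ℕ) < c.sizeUpTo (c.index j' + 1) := c.lt_sizeUpTo_index_succ j'
  have h2 : c.sizeUpTo (c.index j) ≤ j := c.sizeUpTo_index_le j
  have h3 : c.sizeUpTo (c.index j' + 1) ≤ c.sizeUpTo (c.index j) :=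
    c.monotone_sizeUpTo (by exact_mod_cast hlt)
  have h4 : (j : ℕ) ≤ (j' : ℕ) := hle
  omega

lemma fibCard_index {n : ℕ} (c : Composition n) (i : Fin c.length) :
    fibCard c.index i = c.blocksFun i := by
  have heq : (univ.filter fun j => c.index j = i)
      = Finset.image (c.embedding i) univ := by
    ext j
    simp only [mem_filter, mem_univ, true_and, Finset.mem_image]
    constructor
    · rintro rfl
      exact ⟨c.invEmbedding j, c.embedding_comp_inv j⟩
    · rintro ⟨a, rfl⟩
      exact c.index_embedding i a
  rw [fibCard, heq, Finset.card_image_of_injective _ (c.embedding i).injective,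
    card_univ, Fintype.card_fin]

lemma Composition.index_surjective {n : ℕ} (c : Composition n) :
    Function.Surjective c.index := by
  intro i
  have hpos : 0 < c.blocksFun i := c.one_le_blocksFun i
  exact ⟨c.embedding i ⟨0, hpos⟩, c.index_embedding i ⟨0, hpos⟩⟩

/-- The composition of `l` built from a positive finsupp summing to `l`. -/
noncomputable def compOfFinsupp {l m : ℕ} (d : ℕ →₀ ℕ)
    (hsum : ∑ i ∈ range m, d i = l) (hpos : ∀ i ∈ range m, 0 < d i) :
    Composition l where
  blocks := List.ofFn (fun b : Fin m => d b)
  blocks_pos := by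
    intro x hx
    rw [List.mem_ofFn] at hx
    obtain ⟨b, rfl⟩ := hx
    exact hpos b (Finset.mem_range.mpr b.isLt)
  blocks_sum := by
    rw [List.sum_ofFn, Fin.sum_univ_eq_sum_range]
    exact hsum

lemma compOfFinsupp_length {l m : ℕ} (d : ℕ →₀ ℕ)
    (hsum : ∑ i ∈ range m, d i = l) (hpos : ∀ i ∈ range m, 0 < d i) :
    (compOfFinsupp d hsum hpos).length = m := by
  simp [compOfFinsupp, Composition.length]

lemma compOfFinsupp_blocksFun {l m : ℕ} (d : ℕ →₀ ℕ)
    (hsum : ∑ i ∈ range m, d i = l) (hpos : ∀ i ∈ range m, 0 < d i)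
    (i : Fin (compOfFinsupp d hsum hpos).length) :
    (compOfFinsupp d hsum hpos).blocksFun i = d i := by
  simp [compOfFinsupp, Composition.blocksFun, List.get_ofFn]
  exact List.get_ofFn _ _

/-- The monotone surjection associated to a positive finsupp summing to `l`. -/
noncomputable def psiOfFinsupp {l m : ℕ} (d : ℕ →₀ ℕ)
    (hsum : ∑ i ∈ range m, d i = l) (hpos : ∀ i ∈ range m, 0 < d i) :
    Fin l → Fin m :=
  fun j => Fin.cast (compOfFinsupp_length d hsum hpos)
    ((compOfFinsupp d hsum hpos).index j)

lemma psiOfFinsupp_monotone {l m : ℕ} (d : ℕ →₀ ℕ)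
    (hsum : ∑ i ∈ range m, d i = l) (hpos : ∀ i ∈ range m, 0 < d i) :
    Monotone (psiOfFinsupp d hsum hpos) := by
  intro j j' h
  exact ((compOfFinsupp d hsum hpos).index_monotone h : _)

lemma psiOfFinsupp_surjective {l m : ℕ} (d : ℕ →₀ ℕ)
    (hsum : ∑ i ∈ range m, d i = l) (hpos : ∀ i ∈ range m, 0 < d i) :
    Function.Surjective (psiOfFinsupp d hsum hpos) := by
  intro b
  obtain ⟨j, hj⟩ := (compOfFinsupp d hsum hpos).index_surjective
    (Fin.cast (compOfFinsupp_length d hsum hpos).symm b)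
  refine ⟨j, ?_⟩
  simp [psiOfFinsupp, hj]

lemma psiOfFinsupp_fibCard {l m : ℕ} (d : ℕ →₀ ℕ)
    (hsum : ∑ i ∈ range m, d i = l) (hpos : ∀ i ∈ range m, 0 < d i)
    (b : Fin m) :
    fibCard (psiOfFinsupp d hsum hpos) b = d b := by
  have h1 : fibCard (psiOfFinsupp d hsum hpos) b
      = fibCard (compOfFinsupp d hsum hpos).index
        (Fin.cast (compOfFinsupp_length d hsum hpos).symm b) := by
    unfold fibCard
    congr 1
    ext j
    simp [psiOfFinsupp, Fin.ext_iff]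
  rw [h1, fibCard_index, compOfFinsupp_blocksFun]
  rfl

/-- The finsupp of fiber cardinalities of `ψ : Fin l → Fin m`. -/
noncomputable def finsuppOfPsi {l m : ℕ} (ψ : Fin l → Fin m) : ℕ →₀ ℕ :=
  Finsupp.onFinset (range m)
    (fun i => if h : i < m then fibCard ψ ⟨i, h⟩ else 0)
    (by
      intro a ha
      rw [Finset.mem_range]
      by_contra h
      simp [dif_neg h] at ha)

lemma finsuppOfPsi_apply {l m : ℕ} (ψ : Fin l → Fin m) (b : Fin m) :
    finsuppOfPsi ψ (b : ℕ) = fibCard ψ b := by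
  simp [finsuppOfPsi, b.isLt]

lemma finsuppOfPsi_sum {l m : ℕ} (ψ : Fin l → Fin m) :
    ∑ i ∈ range m, finsuppOfPsi ψ i = l := by
  rw [← Fin.sum_univ_eq_sum_range]
  rw [Finset.sum_congr rfl fun b _ => finsuppOfPsi_apply ψ b]
  have h := Finset.card_eq_sum_card_fiberwise
    (f := ψ) (s := (univ : Finset (Fin l))) (t := (univ : Finset (Fin m)))
    (fun x _ => mem_univ _)
  rw [card_univ, Fintype.card_fin] at h
  exact h.symm

lemma fibCard_pos_of_surjective {l m : ℕ} {ψ : Fin l → Fin m}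
    (hs : Function.Surjective ψ) (b : Fin m) : 0 < fibCard ψ b := by
  obtain ⟨j, hj⟩ := hs b
  rw [fibCard, Finset.card_pos]
  exact ⟨j, by simp [hj]⟩

lemma mem_target {l m : ℕ} {d : ℕ →₀ ℕ}
    {inst : DecidablePred fun d : ℕ →₀ ℕ => ∀ i ∈ range m, 0 < d i}
    (hd : d ∈ @Finset.filter _ (fun d => ∀ i ∈ range m, 0 < d i) inst
      (Finset.finsuppAntidiag (range m) l)) :
    (∑ i ∈ range m, d i = l) ∧ ∀ i ∈ range m, 0 < d i := by
  classical
  rw [Finset.mem_filter] at hd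
  have h1 := hd.1
  rw [Finset.mem_finsuppAntidiag] at h1
  exact ⟨h1.1, hd.2⟩

set_option maxHeartbeats 1000000 in
/-- Key bijection: the inner sum over monotone surjections equals the `l`-th
coefficient of `(exp ℚ - 1)^m`. -/
lemma inner_sum_eq_coeff (l m : ℕ) :
    (∑ ψ : Fin l → Fin m,
      if Monotone ψ ∧ Function.Surjective ψ then
        ∏ b : Fin m, (1 : ℚ) / (Nat.factorial (fibCard ψ b))
      else 0)
    = PowerSeries.coeff l ((PowerSeries.exp ℚ - 1) ^ m) := by
  have hcoeff : ∀ n : ℕ, PowerSeries.coeff n (PowerSeries.exp ℚ - 1)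
      = if n = 0 then 0 else (1 : ℚ) / n.factorial := by
    intro n
    rw [map_sub, PowerSeries.coeff_exp, PowerSeries.coeff_one]
    rcases Nat.eq_zero_or_pos n with h | h
    · subst h; simp
    · rw [if_neg h.ne', if_neg h.ne', sub_zero]
      simp
  rw [PowerSeries.coeff_pow]
  rw [← Finset.sum_filter_of_ne (p := fun d : ℕ →₀ ℕ => ∀ i ∈ range m, 0 < d i)
    (fun d hd hne => by
      intro i hi
      by_contra h0
      have hzero : d i = 0 := by omega
      refine hne (Finset.prod_eq_zero hi ?_)
      rw [hzero, hcoeff]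
      simp)]
  rw [← Finset.sum_filter]
  apply Finset.sum_bij'
    (i := fun ψ _ => finsuppOfPsi ψ)
    (j := fun d hd => psiOfFinsupp d (mem_target hd).1 (mem_target hd).2)
  case hi =>
    intro ψ hψ
    simp only [Finset.mem_filter, Finset.mem_univ, true_and] at hψ
    rw [Finset.mem_filter, Finset.mem_finsuppAntidiag]
    refine ⟨⟨finsuppOfPsi_sum ψ, Finsupp.support_onFinset_subset⟩, ?_⟩
    intro i hi
    rw [Finset.mem_range] at hi
    have := fibCard_pos_of_surjective hψ.2 ⟨i, hi⟩
    have happ := finsuppOfPsi_apply ψ ⟨i, hi⟩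
    simp only [Fin.val_mk] at happ
    omega
  case hj =>
    intro d hd
    simp only [Finset.mem_filter, Finset.mem_univ, true_and]
    exact ⟨psiOfFinsupp_monotone _ _ _, psiOfFinsupp_surjective _ _ _⟩
  case left_neg =>
    intro ψ hψ
    simp only [Finset.mem_filter, Finset.mem_univ, true_and] at hψ
    refine monotone_eq_of_fibCard_eq (psiOfFinsupp_monotone _ _ _) hψ.1 fun b => ?_
    rw [psiOfFinsupp_fibCard, finsuppOfPsi_apply]
  case right_neg =>
    intro d hd
    apply Finsupp.ext
    intro a
    rcases lt_or_ge a m with h | h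
    · have h1 := finsuppOfPsi_apply (psiOfFinsupp d (mem_target hd).1 (mem_target hd).2) ⟨a, h⟩
      simp only [Fin.val_mk] at h1
      rw [h1, psiOfFinsupp_fibCard]
    · have h1 : finsuppOfPsi (psiOfFinsupp d (mem_target hd).1 (mem_target hd).2) a = 0 := by
        simp [finsuppOfPsi, Nat.not_lt.mpr h]
      rw [h1]
      symm
      rw [← Finsupp.notMem_support_iff]
      intro hmem
      have h2 := (Finset.mem_filter.mp hd).1
      rw [Finset.mem_finsuppAntidiag] at h2
      have h3 := h2.2 hmem
      rw [Finset.mem_range] at h3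
      omega
  case h =>
    intro ψ hψ
    simp only [Finset.mem_filter, Finset.mem_univ, true_and] at hψ
    rw [← Fin.prod_univ_eq_prod_range]
    refine Finset.prod_congr rfl fun b _ => ?_
    rw [hcoeff, finsuppOfPsi_apply]
    rw [if_neg (fibCard_pos_of_surjective hψ.2 b).ne']

/-- The power-series evaluation of the alternating sum. -/
lemma alternating_sum_coeff (l : ℕ) (hl : 1 ≤ l) :
    ∑ m ∈ Finset.Icc 1 l,
      (-1 : ℚ) ^ (l - m) * PowerSeries.coeff l ((PowerSeries.exp ℚ - 1) ^ m)
    = 1 / (Nat.factorial l : ℚ) := by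
  set y : PowerSeries ℚ := 1 - PowerSeries.exp ℚ with hy
  have hterm : ∀ m ∈ Finset.Icc 1 l,
      (-1 : ℚ) ^ (l - m) * PowerSeries.coeff l ((PowerSeries.exp ℚ - 1) ^ m)
      = (-1 : ℚ) ^ l * PowerSeries.coeff l (y ^ m) := by
    intro m hm
    rw [Finset.mem_Icc] at hm
    have h1 : (PowerSeries.exp ℚ - 1) ^ m = PowerSeries.C ((-1 : ℚ) ^ m) * y ^ m := by
      rw [map_pow, ← mul_pow]
      congr 1
      rw [map_neg, map_one, hy]
      ring
    rw [h1, PowerSeries.coeff_C_mul, ← mul_assoc, ← pow_add]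
    congr 2
    omega
  rw [Finset.sum_congr rfl hterm, ← Finset.mul_sum, ← map_sum]
  -- geometric sum
  have hrange : ∑ i ∈ range (l + 1), y ^ i = 1 + ∑ m ∈ Finset.Icc 1 l, y ^ m := by
    rw [Finset.range_eq_Ico, Finset.sum_eq_sum_Ico_succ_bot (by omega), pow_zero,
      Finset.Ico_add_one_right_eq_Icc]
  have hmul : PowerSeries.exp ℚ * ∑ m ∈ Finset.Icc 1 l, y ^ m = y - y ^ (l + 1) := by
    have h3 : (∑ i ∈ range (l + 1), y ^ i) * (y - 1) = y ^ (l + 1) - 1 := geom_sum_mul y (l + 1)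
    have hexp : PowerSeries.exp ℚ = 1 - y := by rw [hy]; ring
    have hs : ∑ m ∈ Finset.Icc 1 l, y ^ m = ∑ i ∈ range (l + 1), y ^ i - 1 := by
      rw [hrange]; ring
    calc PowerSeries.exp ℚ * ∑ m ∈ Finset.Icc 1 l, y ^ m
        = -((∑ i ∈ range (l + 1), y ^ i) * (y - 1)) - (1 - y) := by
          rw [hexp, hs]; ring
      _ = -(y ^ (l + 1) - 1) - (1 - y) := by rw [h3]
      _ = y - y ^ (l + 1) := by ring
  set E' : PowerSeries ℚ := PowerSeries.evalNegHom (PowerSeries.exp ℚ) with hE'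
  have hunit : PowerSeries.exp ℚ * E' = 1 := PowerSeries.exp_mul_exp_neg_eq_one
  have hG : ∑ m ∈ Finset.Icc 1 l, y ^ m = E' * (y - y ^ (l + 1)) := by
    calc ∑ m ∈ Finset.Icc 1 l, y ^ m
        = 1 * ∑ m ∈ Finset.Icc 1 l, y ^ m := by rw [one_mul]
      _ = (PowerSeries.exp ℚ * E') * ∑ m ∈ Finset.Icc 1 l, y ^ m := by rw [hunit]
      _ = E' * (PowerSeries.exp ℚ * ∑ m ∈ Finset.Icc 1 l, y ^ m) := by ring
      _ = E' * (y - y ^ (l + 1)) := by rw [hmul]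
  rw [hG]
  have hsplit : E' * (y - y ^ (l + 1)) = (E' - 1) - E' * y ^ (l + 1) := by
    have : E' * y = E' - 1 := by
      have : E' * y = E' * 1 - E' * PowerSeries.exp ℚ := by rw [hy]; ring
      rw [this, mul_one, mul_comm, hunit]
    rw [mul_sub, this]
  rw [hsplit, map_sub, map_sub]
  -- coeff l (E' * y^(l+1)) = 0
  have hXdvd : (PowerSeries.X : PowerSeries ℚ) ∣ y := by
    rw [PowerSeries.X_dvd_iff]
    simp [hy]
  have hdvd : (PowerSeries.X : PowerSeries ℚ) ^ (l + 1) ∣ E' * y ^ (l + 1) :=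
    Dvd.dvd.mul_left (pow_dvd_pow_of_dvd hXdvd (l + 1)) E'
  obtain ⟨w, hw⟩ := hdvd
  have hzero : PowerSeries.coeff l (E' * y ^ (l + 1)) = 0 := by
    rw [hw, mul_comm, PowerSeries.coeff_mul_X_pow']
    rw [if_neg (by omega)]
  rw [hzero, sub_zero]
  -- coeff l (E' - 1)
  have hcoeffE' : PowerSeries.coeff l E' = (-1 : ℚ) ^ l * (1 / l.factorial) := by
    rw [hE']
    show PowerSeries.coeff l (PowerSeries.rescale (-1 : ℚ) (PowerSeries.exp ℚ))
      = (-1 : ℚ) ^ l * (1 / l.factorial)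
    rw [PowerSeries.coeff_rescale, PowerSeries.coeff_exp]
    simp
  have hcoeff1 : PowerSeries.coeff l (1 : PowerSeries ℚ) = 0 := by
    rw [PowerSeries.coeff_one, if_neg (by omega)]
  rw [hcoeffE', hcoeff1, sub_zero, ← mul_assoc, ← mul_pow]
  simp

/-- For a fixed positive integer `l`, the sum over all `m` with `1 ≤ m ≤ l` and all
order-preserving surjections `ψ : {1,…,l} → {1,…,m}` of
`(-1)^(l-m) · ∏_b 1/|ψ⁻¹(b)|!` equals `1/l!`. -/
theorem stmt_0 (l : ℕ) (hl : 1 ≤ l) :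
    ∑ m ∈ Finset.Icc 1 l,
      ∑ ψ : Fin l → Fin m,
        (if Monotone ψ ∧ Function.Surjective ψ then
          (-1 : ℚ) ^ (l - m) *
            ∏ b : Fin m,
              (1 : ℚ) / (Nat.factorial (Finset.univ.filter fun i => ψ i = b).card)
        else 0)
      = 1 / (Nat.factorial l : ℚ) := by
  rw [← alternating_sum_coeff l hl]
  refine Finset.sum_congr rfl fun m hm => ?_
  rw [← inner_sum_eq_coeff, Finset.mul_sum]
  refine Finset.sum_congr rfl fun ψ _ => ?_
  split_ifs with h
  · rfl
  · rw [mul_zero]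
end

section
/- Let d ≥ 1 be an integer and let (N_n)_{n∈ℤ} be a family of rational numbers satisfying N_{n+d} = N_n for all n ∈ ℤ and N_{-n} = N_n for all n ∈ ℤ. Then the generating series Σ_{n≥0} n·N_n·q^n is the Laurent expansion at q = 0 of a rational function f(q) of q satisfying f(1/q) = f(q). -/
/-- A rational function `f ∈ ℚ(q)` is invariant under `q ↔ 1/q` if substituting
`X⁻¹` for the variable (via evaluation into `RatFunc ℚ`) returns `f`. -/
def qInv (f : RatFunc ℚ) : Prop :=
  RatFunc.eval (algebraMap ℚ (RatFunc ℚ)) (RatFunc.X)⁻¹ f = f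

universe u
lemma eval_div_aux {K L : Type u} [Field K] [Field L] (φ : K →+* L) (a : L)
    (p q : Polynomial K) (hq : q ≠ 0) (hqe : q.eval₂ φ a ≠ 0) :
    RatFunc.eval φ a (algebraMap (Polynomial K) (RatFunc K) p
        / algebraMap (Polynomial K) (RatFunc K) q)
      = p.eval₂ φ a / q.eval₂ φ a := by
  set x := algebraMap (Polynomial K) (RatFunc K) p / algebraMap (Polynomial K) (RatFunc K) q with hx
  obtain ⟨r, hr⟩ := (RatFunc.denom_dvd (x := x) hq).mpr ⟨p, rfl⟩
  have hde : x.denom.eval₂ φ a ≠ 0 := fun h => hqe (by rw [hr, Polynomial.eval₂_mul, h, zero_mul])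
  have h0 : algebraMap _ (RatFunc K) x.num / algebraMap _ (RatFunc K) x.denom
      = algebraMap _ (RatFunc K) p / algebraMap _ (RatFunc K) q := by
    rw [RatFunc.num_div_denom]
  rw [div_eq_div_iff (RatFunc.algebraMap_ne_zero (RatFunc.denom_ne_zero x))
    (RatFunc.algebraMap_ne_zero hq), ← map_mul, ← map_mul] at h0
  have hcross := RatFunc.algebraMap_injective K h0
  rw [RatFunc.eval, div_eq_div_iff hde hqe]
  have h2 := congrArg (Polynomial.eval₂ φ a) hcross
  rwa [Polynomial.eval₂_mul, Polynomial.eval₂_mul] at h2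

/-- If `(N_n)_{n∈ℤ}` are rationals with `N_{n+d} = N_n` and `N_{-n} = N_n`, then the
generating series `Σ_{n≥0} n·N_n·q^n` is the Laurent expansion at `q = 0` of a rational
function `f(q)` with `f(1/q) = f(q)`. -/
theorem stmt_3 (d : ℕ) (hd : 1 ≤ d) (N : ℤ → ℚ)
    (hper : ∀ n : ℤ, N (n + d) = N n) (hsym : ∀ n : ℤ, N (-n) = N n) :
    ∃ f : RatFunc ℚ,
      (∀ n : ℤ, (f : LaurentSeries ℚ).coeff n = if 0 ≤ n then (n : ℚ) * N n else 0) ∧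
      qInv f := by
  have hd0 : d ≠ 0 := by omega
  have hNsub : ∀ n : ℤ, N (n - d) = N n := by
    intro n
    have h := hper (n - d)
    rw [sub_add_cancel] at h
    exact h.symm
  set c : ℕ → ℚ := fun m => ((min m (2*d - m) : ℕ) : ℚ) * N m with hc
  set P : Polynomial ℚ := ∑ m ∈ Finset.range (2*d+1), Polynomial.C (c m) * Polynomial.X ^ m
    with hP
  set Q : Polynomial ℚ := (1 - Polynomial.X ^ d)^2 with hQdef
  have hQne : Q ≠ 0 := by
    intro h
    have h2 := congrArg (Polynomial.eval 0) h
    simp [hQdef, zero_pow hd0] at h2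
  set S : PowerSeries ℚ := PowerSeries.mk (fun n => (n : ℚ) * N n) with hS
  set φ : ℚ →+* RatFunc ℚ := algebraMap ℚ (RatFunc ℚ) with hφ
  -- key power series identity
  have key : (Q : PowerSeries ℚ) * S = (P : PowerSeries ℚ) := by
    have hQcoe : (Q : PowerSeries ℚ) = (1 - PowerSeries.X ^ d)^2 := by
      rw [hQdef]
      push_cast
      rfl
    rw [hQcoe]
    have expand : ((1 - PowerSeries.X ^ d)^2 : PowerSeries ℚ) * S
        = S - PowerSeries.X ^ d * S - PowerSeries.X ^ d * S
          + PowerSeries.X ^ (2*d) * S := by ring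
    rw [expand]
    ext m
    have hPc : P.coeff m = if m ≤ 2*d then c m else 0 := by
      rw [hP, Polynomial.finset_sum_coeff]
      simp only [Polynomial.coeff_C_mul, Polynomial.coeff_X_pow, mul_ite, mul_one, mul_zero]
      rw [Finset.sum_ite_eq]
      simp [Finset.mem_range, Nat.lt_succ_iff]
    simp only [map_add, map_sub, PowerSeries.coeff_X_pow_mul', hS, PowerSeries.coeff_mk,
      Polynomial.coeff_coe, hPc]
    rcases lt_or_ge m d with h1 | h1
    · rw [if_neg (by omega), if_neg (by omega), if_pos (by omega)]
      simp only [hc]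
      rw [min_eq_left (show m ≤ 2*d - m by omega)]
      ring
    · rcases lt_or_ge m (2*d) with h2 | h2
      · rw [if_pos h1, if_neg (by omega), if_pos (by omega)]
        have e1 : ((m - d : ℕ) : ℤ) = (m : ℤ) - d := by omega
        rw [e1, hNsub, Nat.cast_sub h1]
        simp only [hc]
        rw [min_eq_right (show 2*d - m ≤ m by omega), Nat.cast_sub (le_of_lt h2)]
        push_cast
        ring
      · rw [if_pos (by omega), if_pos h2]
        have e1 : ((m - d : ℕ) : ℤ) = (m : ℤ) - d := by omega
        have e2 : ((m - 2*d : ℕ) : ℤ) = ((m : ℤ) - d) - d := by omega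
        rw [e1, e2]
        simp only [hNsub]
        rw [Nat.cast_sub (show d ≤ m by omega), Nat.cast_sub h2]
        push_cast
        split_ifs with h3
        · have hm : m = 2*d := by omega
          subst hm
          simp only [hc]
          have : 2*d - 2*d = 0 := by omega
          rw [this]
          simp
          ring
        · ring
  refine ⟨algebraMap _ (RatFunc ℚ) P / algebraMap _ (RatFunc ℚ) Q, ?_, ?_⟩
  · -- coefficients
    have hQL : ((Q : PowerSeries ℚ) : LaurentSeries ℚ) ≠ 0 := by
      intro h
      apply hQne
      have h1 : (Q : PowerSeries ℚ) = 0 := by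
        apply HahnSeries.ofPowerSeries_injective (Γ := ℤ) (R := ℚ)
        rw [map_zero]
        exact h
      exact Polynomial.coe_eq_zero_iff.mp h1
    have hfL : ((algebraMap _ (RatFunc ℚ) P / algebraMap _ (RatFunc ℚ) Q : RatFunc ℚ)
        : LaurentSeries ℚ) = ((S : PowerSeries ℚ) : LaurentSeries ℚ) := by
      rw [map_div₀]
      have hPc : ((algebraMap _ (RatFunc ℚ) P : RatFunc ℚ) : LaurentSeries ℚ)
          = ((P : PowerSeries ℚ) : LaurentSeries ℚ) := (RatFunc.coe_coe P).symm
      have hQc : ((algebraMap _ (RatFunc ℚ) Q : RatFunc ℚ) : LaurentSeries ℚ)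
          = ((Q : PowerSeries ℚ) : LaurentSeries ℚ) := (RatFunc.coe_coe Q).symm
      rw [hPc, hQc, div_eq_iff hQL, ← map_mul]
      exact congrArg (HahnSeries.ofPowerSeries ℤ ℚ) (by rw [mul_comm]; exact key.symm)
    intro n
    rw [hfL, PowerSeries.coeff_coe]
    rcases le_or_gt 0 n with h | h
    · rw [if_neg (not_lt.2 h), if_pos h, hS, PowerSeries.coeff_mk]
      obtain ⟨k, rfl⟩ := Int.eq_ofNat_of_zero_le h
      simp
    · rw [if_pos h, if_neg (not_le.2 h)]
  · -- qInv
    have hx : (RatFunc.X : RatFunc ℚ) ≠ 0 := RatFunc.X_ne_zero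
    have hXd : (RatFunc.X : RatFunc ℚ) ^ d ≠ 1 := by
      intro h
      have h1 : algebraMap _ (RatFunc ℚ) (Polynomial.X ^ d : Polynomial ℚ)
          = algebraMap _ (RatFunc ℚ) (1 : Polynomial ℚ) := by
        rw [map_pow, map_one, RatFunc.algebraMap_X, h]
      have h2 := RatFunc.algebraMap_injective ℚ h1
      have h3 := congrArg Polynomial.natDegree h2
      simp [Polynomial.natDegree_X_pow] at h3
      omega
    have hQeval : Q.eval₂ φ (RatFunc.X)⁻¹ = (1 - (RatFunc.X)⁻¹ ^ d)^2 := by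
      rw [hQdef]
      simp [Polynomial.eval₂_pow]
    have hQe : Q.eval₂ φ (RatFunc.X)⁻¹ ≠ 0 := by
      rw [hQeval]
      apply pow_ne_zero
      apply sub_ne_zero.mpr
      intro h
      apply hXd
      rw [inv_pow] at h
      rw [← inv_eq_one, ← h]
    have hX2 : (RatFunc.X : RatFunc ℚ) ^ (2*d) ≠ 0 := pow_ne_zero _ hx
    have csym : ∀ m ∈ Finset.range (2*d+1), c (2*d - m) = c m := by
      intro m hm
      rw [Finset.mem_range, Nat.lt_succ_iff] at hm
      rw [hc]
      simp only
      have e1 : 2*d - (2*d - m) = m := by omega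
      have e2 : ((2*d - m : ℕ) : ℤ) = 2*(d:ℤ) - m := by omega
      have e3 : N (2*(d:ℤ) - m) = N m := by
        have t1 := hper (-(m:ℤ) + d)
        have t2 := hper (-(m:ℤ))
        have t3 := hsym (m : ℤ)
        have e4 : 2*(d:ℤ) - m = -(m:ℤ) + d + d := by ring
        rw [e4, t1, t2, t3]
      rw [e1, e2, e3, min_comm]
    have hP2 : P.eval₂ φ (RatFunc.X)⁻¹ * RatFunc.X ^ (2*d) = algebraMap _ (RatFunc ℚ) P := by
      have heval : P.eval₂ φ (RatFunc.X)⁻¹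
          = ∑ m ∈ Finset.range (2*d+1), φ (c m) * (RatFunc.X)⁻¹ ^ m := by
        rw [hP, Polynomial.eval₂_finset_sum]
        refine Finset.sum_congr rfl fun m _ => ?_
        rw [Polynomial.eval₂_mul, Polynomial.eval₂_C, Polynomial.eval₂_pow, Polynomial.eval₂_X]
      have hmapP : algebraMap _ (RatFunc ℚ) P
          = ∑ m ∈ Finset.range (2*d+1), φ (c m) * RatFunc.X ^ m := by
        rw [hP, map_sum]
        refine Finset.sum_congr rfl fun m _ => ?_
        rw [map_mul, map_pow, RatFunc.algebraMap_X, RatFunc.algebraMap_C, hφ,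
          ]
        exact congrArg (· * _) (RingHom.congr_fun (Subsingleton.elim _ _) (c m))
      rw [heval, hmapP, Finset.sum_mul]
      rw [← Finset.sum_range_reflect (fun m => φ (c m) * RatFunc.X ^ m) (2*d+1)]
      refine Finset.sum_congr rfl fun m hm => ?_
      rw [Finset.mem_range, Nat.lt_succ_iff] at hm
      have e1 : 2*d + 1 - 1 - m = 2*d - m := by omega
      rw [e1, csym m (by rw [Finset.mem_range]; omega)]
      rw [mul_assoc]
      congr 1
      rw [inv_pow, inv_mul_eq_div, pow_sub₀ _ hx hm, div_eq_mul_inv]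
    have hQ2 : Q.eval₂ φ (RatFunc.X)⁻¹ * RatFunc.X ^ (2*d) = algebraMap _ (RatFunc ℚ) Q := by
      rw [hQeval, hQdef, map_pow, map_sub, map_one, map_pow, RatFunc.algebraMap_X]
      have hXdne : (RatFunc.X : RatFunc ℚ) ^ d ≠ 0 := pow_ne_zero _ hx
      field_simp
      rw [one_div, inv_pow, mul_comm 2 d, pow_mul, ← mul_pow, sub_mul, one_mul,
        inv_mul_cancel₀ hXdne]
      ring
    unfold qInv
    rw [← hφ, eval_div_aux φ _ P Q hQne hQe, ← hP2, ← hQ2,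
      mul_div_mul_right _ _ hX2]
end

section
/- Let A be an abelian category, T a totally ordered set, and Z : C(A) → T a weak stability function. If an object E of A admits a filtration 0 = E₀ ⊂ E₁ ⊂ ⋯ ⊂ E_n = E with subquotients F_i = E_i/E_{i-1} being Z-semistable and Z(F₁) ≻ Z(F₂) ≻ ⋯ ≻ Z(F_n), then this filtration (a Harder–Narasimhan filtration) is unique up to isomorphism. -/
open CategoryTheory CategoryTheory.Limits

universe v u

/-- The `i`-th subquotient `E_{i+1}/E_i` of a strictly increasing filtration of
subobjects of an object of an abelian category. -/
noncomputable def hnSubquot {C : Type u} [Category.{v} C] [Abelian C] {E : C} {n : ℕ}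
    (F : Fin (n + 1) → Subobject E) (hF : StrictMono F) (i : Fin n) : C :=
  cokernel (Subobject.ofLE _ _ (hF (Fin.castSucc_lt_succ : Fin.castSucc i < Fin.succ i)).le)

namespace HNUniqueAux

variable {C : Type u} [Category.{v} C] [Abelian C] {T : Type*} [LinearOrder T]

lemma arrow_eq_zero_of_eq_bot {X : C} {S : Subobject X} (h : S = ⊥) : S.arrow = 0 := by
  subst h; exact Subobject.bot_arrow

lemma le_of_comp_cokernel_eq_zero {E : C} {A P Q : Subobject E} (hAQ : A ≤ Q) (hPQ : P ≤ Q)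
    (w : Subobject.ofLE A Q hAQ ≫ cokernel.π (Subobject.ofLE P Q hPQ) = 0) : A ≤ P := by
  refine Subobject.le_of_comm (Abelian.monoLift _ (Subobject.ofLE A Q hAQ) w) ?_
  rw [← Subobject.ofLE_arrow hPQ, ← Category.assoc, Abelian.monoLift_comp,
    Subobject.ofLE_arrow]

section withZ

variable (Z : C → T)
variable (hiso : ∀ X Y : C, (X ≅ Y) → Z X = Z Y)
variable (hseesaw : ∀ (X : C) (S : Subobject X), S ≠ ⊥ → S ≠ ⊤ →
      (Z (S : C) ≤ Z X ∧ Z X ≤ Z (cokernel S.arrow)) ∨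
      (Z (cokernel S.arrow) ≤ Z X ∧ Z X ≤ Z (S : C)))
variable (ss : C → Prop)
variable (hss : ∀ X : C, ss X ↔
      ∀ S : Subobject X, S ≠ ⊥ → S ≠ ⊤ → Z (S : C) ≤ Z (cokernel S.arrow))

include hiso hseesaw hss

/-- A proper nonzero subobject of a semistable object has smaller or equal `Z`. -/
lemma semistable_sub {X : C} (hX : ss X) {S : Subobject X} (h1 : S ≠ ⊥) (h2 : S ≠ ⊤) :
    Z (S : C) ≤ Z X := by
  rcases hseesaw X S h1 h2 with h | h
  · exact h.1
  · exact le_trans ((hss X).1 hX S h1 h2) h.1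

/-- A semistable object has smaller or equal `Z` than any proper nonzero quotient. -/
lemma semistable_quot {X : C} (hX : ss X) {S : Subobject X} (h1 : S ≠ ⊥) (h2 : S ≠ ⊤) :
    Z X ≤ Z (cokernel S.arrow) := by
  rcases hseesaw X S h1 h2 with h | h
  · exact h.2
  · exact le_trans h.2 ((hss X).1 hX S h1 h2)

/-- If there is a nonzero morphism between semistable objects, the `Z`-values compare. -/
lemma hom_lemma {Q R : C} (g : Q ⟶ R) (hg : g ≠ 0) (hQ : ss Q) (hR : ss R) :
    Z Q ≤ Z R := by
  -- Step B : `Z (image g) ≤ Z R`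
  have hB : Z (image g) ≤ Z R := by
    have him : Z (image g) = Z ((imageSubobject g : Subobject R) : C) :=
      hiso _ _ (imageSubobjectIso g).symm
    by_cases htop : imageSubobject g = ⊤
    · have hIso : IsIso (imageSubobject g).arrow :=
        (Subobject.isIso_arrow_iff_eq_top _).mpr htop
      exact le_of_eq (him.trans (hiso _ _ (asIso (imageSubobject g).arrow)))
    · have hbot : imageSubobject g ≠ ⊥ := by
        intro h
        apply hg
        rw [← imageSubobject_arrow_comp g, arrow_eq_zero_of_eq_bot h, comp_zero]
      rw [him]
      exact semistable_sub Z hiso hseesaw ss hss hR hbot htop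
  -- Step A : `Z Q ≤ Z (image g)`
  have hcoim : Z (Abelian.coimage g) = Z (image g) := hiso _ _ (Abelian.coimageIsoImage' g)
  by_cases hbot : kernelSubobject g = ⊥
  · have hmono : Mono g :=
      Preadditive.mono_of_kernel_zero (Subobject.mk_eq_bot_iff_zero.mp hbot)
    have : Z Q = Z (image g) := hiso _ _ (imageMonoIsoSource g).symm
    exact this.le.trans hB
  · have htop : kernelSubobject g ≠ ⊤ := by
      intro h
      apply hg
      have : IsIso (kernel.ι g) := (Subobject.isIso_iff_mk_eq_top _).mpr h
      rw [← cancel_epi (kernel.ι g), kernel.condition, comp_zero]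
    have h1 : Z Q ≤ Z (cokernel (kernelSubobject g).arrow) :=
      semistable_quot Z hiso hseesaw ss hss hQ hbot htop
    have h2 : Z (cokernel (kernelSubobject g).arrow) = Z (Abelian.coimage g) := by
      apply hiso
      rw [← kernelSubobject_arrow g]
      exact cokernelEpiComp _ _
    exact h1.trans (h2.trans hcoim).le |>.trans hB

/-- Comparison of `Z`-values of semistable subquotients of nested pairs of
subobjects. -/
lemma subquot_compare {E : C} {B A P Q : Subobject E} (hBA : B ≤ A) (hPQ : P ≤ Q)
    (hBP : B ≤ P) (hAQ : A ≤ Q) (hnAP : ¬ A ≤ P)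
    (h1 : ss (cokernel (Subobject.ofLE B A hBA)))
    (h2 : ss (cokernel (Subobject.ofLE P Q hPQ))) :
    Z (cokernel (Subobject.ofLE B A hBA)) ≤ Z (cokernel (Subobject.ofLE P Q hPQ)) := by
  have w : Subobject.ofLE B A hBA ≫
      (Subobject.ofLE A Q hAQ ≫ cokernel.π (Subobject.ofLE P Q hPQ)) = 0 := by
    rw [← Category.assoc, Subobject.ofLE_comp_ofLE,
      ← Subobject.ofLE_comp_ofLE B P Q hBP hPQ, Category.assoc, cokernel.condition,
      comp_zero]
  refine hom_lemma Z hiso hseesaw ss hss (cokernel.desc _ _ w) ?_ h1 h2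
  intro h
  apply hnAP
  apply le_of_comp_cokernel_eq_zero hAQ hPQ
  have := cokernel.π_desc (Subobject.ofLE B A hBA)
    (Subobject.ofLE A Q hAQ ≫ cokernel.π (Subobject.ofLE P Q hPQ)) w
  rw [← this, h, comp_zero]

/-- The first step of one HN filtration embeds into some step of the other,
with a `Z`-comparison of the corresponding subquotients. -/
lemma first_step {E : C} {m m' : ℕ}
    (F : Fin (m + 2) → Subobject E) (F' : Fin (m' + 2) → Subobject E)
    (hF : StrictMono F) (hF' : StrictMono F')
    (h0 : F 0 = F' 0) (htop : F (Fin.last (m + 1)) = F' (Fin.last (m' + 1)))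
    (hssF : ∀ i, ss (hnSubquot F hF i)) (hssF' : ∀ i, ss (hnSubquot F' hF' i)) :
    ∃ j : Fin (m' + 1), F 1 ≤ F' j.succ ∧
      Z (hnSubquot F hF 0) ≤ Z (hnSubquot F' hF' j) := by
  classical
  have hex : ∃ k : ℕ, ∃ h : k < m' + 1, F 1 ≤ F' (Fin.succ ⟨k, h⟩) := by
    refine ⟨m', Nat.lt_succ_self m', ?_⟩
    have h1 : F 1 ≤ F (Fin.last (m + 1)) := hF.monotone (Fin.le_last _)
    rw [htop] at h1
    have : Fin.succ (⟨m', Nat.lt_succ_self m'⟩ : Fin (m' + 1)) = Fin.last (m' + 1) := rfl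
    rwa [this]
  set k₀ := Nat.find hex with hk₀def
  obtain ⟨hk₀, hle⟩ := Nat.find_spec hex
  set j : Fin (m' + 1) := ⟨k₀, hk₀⟩ with hjdef
  have hnle : ¬ F 1 ≤ F' j.castSucc := by
    intro hco
    rcases Nat.eq_zero_or_pos k₀ with hz | hpos
    · have hcs : j.castSucc = (0 : Fin (m' + 2)) := by
        apply Fin.ext; simp [hjdef, hz]
      rw [hcs, ← h0] at hco
      exact absurd (lt_of_lt_of_le (hF (by simp [Fin.lt_def])) hco) (lt_irrefl _)
    · refine Nat.find_min hex (show k₀ - 1 < k₀ by omega) ?_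
      refine ⟨by omega, ?_⟩
      have hsc : Fin.succ (⟨k₀ - 1, by omega⟩ : Fin (m' + 1)) = j.castSucc := by
        apply Fin.ext
        simp [hjdef]
        omega
      rw [hsc]
      exact hco
  have hBP : F (Fin.castSucc 0) ≤ F' (Fin.castSucc j) := by
    have hcs : F (Fin.castSucc (0 : Fin (m + 1))) = F' 0 := by
      rw [show Fin.castSucc (0 : Fin (m + 1)) = 0 from rfl]; exact h0
    rw [hcs]
    exact hF'.monotone (Fin.zero_le _)
  have hAQ : F (Fin.succ 0) ≤ F' (Fin.succ j) := by
    rw [show Fin.succ (0 : Fin (m + 1)) = 1 from rfl]; exact hle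
  have hnAP : ¬ F (Fin.succ 0) ≤ F' (Fin.castSucc j) := by
    rw [show Fin.succ (0 : Fin (m + 1)) = 1 from rfl]; exact hnle
  refine ⟨j, hle, ?_⟩
  exact subquot_compare Z hiso hseesaw ss hss _ _ hBP hAQ hnAP (hssF 0) (hssF' j)

/-- Main induction: two HN filtrations with the same bottom and top agree. -/
lemma key (E : C) : ∀ (n n' : ℕ)
    (F : Fin (n + 1) → Subobject E) (F' : Fin (n' + 1) → Subobject E)
    (hF : StrictMono F) (hF' : StrictMono F')
    (h0 : F 0 = F' 0) (htop : F (Fin.last n) = F' (Fin.last n'))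
    (_ : ∀ i, ss (hnSubquot F hF i)) (_ : ∀ i, ss (hnSubquot F' hF' i))
    (_ : ∀ i j : Fin n, i < j → Z (hnSubquot F hF j) < Z (hnSubquot F hF i))
    (_ : ∀ i j : Fin n', i < j → Z (hnSubquot F' hF' j) < Z (hnSubquot F' hF' i)),
    n = n' ∧ ∀ (i : ℕ) (h : i < n + 1) (h' : i < n' + 1), F ⟨i, h⟩ = F' ⟨i, h'⟩ := by
  intro n
  induction n with
  | zero =>
    intro n' F F' hF hF' h0 htop hssF hssF' hdec hdec'
    match n' with
    | 0 =>
      refine ⟨rfl, ?_⟩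
      intro i h h'
      have h1 : (⟨i, h⟩ : Fin 1) = 0 := by apply Fin.ext; simp; omega
      rw [h1]
      exact h0
    | m' + 1 =>
      exfalso
      have hlt : F' 0 < F' (Fin.last (m' + 1)) := hF' Fin.last_pos
      rw [← htop, show Fin.last 0 = (0 : Fin 1) from rfl, h0] at hlt
      exact lt_irrefl _ hlt
  | succ m IH =>
    intro n' F F' hF hF' h0 htop hssF hssF' hdec hdec'
    match n' with
    | 0 =>
      exfalso
      have hlt : F 0 < F (Fin.last (m + 1)) := hF Fin.last_pos
      rw [htop, show Fin.last 0 = (0 : Fin 1) from rfl, ← h0] at hlt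
      exact lt_irrefl _ hlt
    | m' + 1 =>
      obtain ⟨j, hj1, hj2⟩ := first_step Z hiso hseesaw ss hss F F' hF hF' h0 htop hssF hssF'
      obtain ⟨j', hj1', hj2'⟩ :=
        first_step Z hiso hseesaw ss hss F' F hF' hF h0.symm htop.symm hssF' hssF
      have hle1 : Z (hnSubquot F' hF' j) ≤ Z (hnSubquot F' hF' 0) := by
        rcases eq_or_ne j 0 with h | h
        · rw [h]
        · exact (hdec' 0 j (Fin.pos_iff_ne_zero.mpr h)).le
      have hle1' : Z (hnSubquot F hF j') ≤ Z (hnSubquot F hF 0) := by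
        rcases eq_or_ne j' 0 with h | h
        · rw [h]
        · exact (hdec 0 j' (Fin.pos_iff_ne_zero.mpr h)).le
      have hj0 : j = 0 := by
        by_contra h
        have hstrict : Z (hnSubquot F' hF' j) < Z (hnSubquot F' hF' 0) :=
          hdec' 0 j (Fin.pos_iff_ne_zero.mpr h)
        exact absurd ((hj2.trans_lt hstrict).trans_le (hj2'.trans hle1')) (lt_irrefl _)
      have hj0' : j' = 0 := by
        by_contra h
        have hstrict : Z (hnSubquot F hF j') < Z (hnSubquot F hF 0) :=
          hdec 0 j' (Fin.pos_iff_ne_zero.mpr h)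
        exact absurd ((hj2'.trans_lt hstrict).trans_le (hj2.trans hle1)) (lt_irrefl _)
      rw [hj0, show Fin.succ (0 : Fin (m' + 1)) = 1 from rfl] at hj1
      rw [hj0', show Fin.succ (0 : Fin (m + 1)) = 1 from rfl] at hj1'
      have h1 : F 1 = F' 1 := le_antisymm hj1 hj1'
      -- shifted filtrations
      set G : Fin (m + 1) → Subobject E := fun i => F i.succ with hGdef
      set G' : Fin (m' + 1) → Subobject E := fun i => F' i.succ with hG'def
      have hG : StrictMono G := fun a b hab => hF (Fin.succ_lt_succ_iff.mpr hab)
      have hG' : StrictMono G' := fun a b hab => hF' (Fin.succ_lt_succ_iff.mpr hab)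
      have hG0 : G 0 = G' 0 := by
        show F (Fin.succ 0) = F' (Fin.succ 0)
        rw [show Fin.succ (0 : Fin (m + 1)) = 1 from rfl,
          show Fin.succ (0 : Fin (m' + 1)) = 1 from rfl]
        exact h1
      have hGtop : G (Fin.last m) = G' (Fin.last m') := htop
      have hqG : ∀ i : Fin m, hnSubquot G hG i = hnSubquot F hF i.succ := fun i => rfl
      have hqG' : ∀ i : Fin m', hnSubquot G' hG' i = hnSubquot F' hF' i.succ := fun i => rfl
      obtain ⟨hnn, hpt⟩ := IH m' G G' hG hG' hG0 hGtop
        (fun i => (hqG i) ▸ hssF i.succ)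
        (fun i => (hqG' i) ▸ hssF' i.succ)
        (fun i j hij => by
          rw [hqG i, hqG j]; exact hdec i.succ j.succ (Fin.succ_lt_succ_iff.mpr hij))
        (fun i j hij => by
          rw [hqG' i, hqG' j]; exact hdec' i.succ j.succ (Fin.succ_lt_succ_iff.mpr hij))
      refine ⟨by omega, ?_⟩
      intro i h h'
      match i, h, h' with
      | 0, h, h' => exact h0
      | k + 1, h, h' =>
        exact hpt k (by omega) (by omega)

end withZ

end HNUniqueAux

/-- Uniqueness of Harder–Narasimhan filtrations: if `Z` is a weak stability function
(see-saw property) on an abelian category, invariant under isomorphism, and an object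
`E` admits two filtrations with `Z`-semistable subquotients of strictly decreasing
`Z`-values, then the two filtrations agree. -/
theorem stmt_8 {C : Type u} [Category.{v} C] [Abelian C]
    {T : Type*} [LinearOrder T] (Z : C → T)
    -- Z is constant on isomorphism classes
    (hiso : ∀ X Y : C, (X ≅ Y) → Z X = Z Y)
    -- see-saw (weak stability function) property
    (hseesaw : ∀ (X : C) (S : Subobject X), S ≠ ⊥ → S ≠ ⊤ →
      (Z (S : C) ≤ Z X ∧ Z X ≤ Z (cokernel S.arrow)) ∨
      (Z (cokernel S.arrow) ≤ Z X ∧ Z X ≤ Z (S : C)))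
    -- the semistability predicate determined by Z
    (ss : C → Prop)
    (hss : ∀ X : C, ss X ↔
      ∀ S : Subobject X, S ≠ ⊥ → S ≠ ⊤ → Z (S : C) ≤ Z (cokernel S.arrow))
    (E : C) (n n' : ℕ)
    (F : Fin (n + 1) → Subobject E) (F' : Fin (n' + 1) → Subobject E)
    (hFmono : StrictMono F) (hF'mono : StrictMono F')
    (hF0 : F 0 = ⊥) (hFtop : F (Fin.last n) = ⊤)
    (hF'0 : F' 0 = ⊥) (hF'top : F' (Fin.last n') = ⊤)
    -- subquotients are Z-semistable
    (hssF : ∀ i : Fin n, ss (hnSubquot F hFmono i))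
    (hssF' : ∀ i : Fin n', ss (hnSubquot F' hF'mono i))
    -- Z-values of subquotients strictly decrease
    (hdec : ∀ i j : Fin n, i < j →
      Z (hnSubquot F hFmono j) < Z (hnSubquot F hFmono i))
    (hdec' : ∀ i j : Fin n', i < j →
      Z (hnSubquot F' hF'mono j) < Z (hnSubquot F' hF'mono i)) :
    n = n' ∧ ∀ (i : ℕ) (h : i < n + 1) (h' : i < n' + 1), F ⟨i, h⟩ = F' ⟨i, h'⟩ :=
  HNUniqueAux.key Z hiso hseesaw ss hss E n n' F F' hFmono hF'mono
    (by rw [hF0, hF'0]) (by rw [hFtop, hF'top]) hssF hssF' hdec hdec'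
end

section
/- With Z, Z' as in (simplicity) [Z corresponding to σ = kω + iω with k < 0 and Z' to iω], take classes v₁, …, v_l all of Chern character (0, 0, β_i, n_i) with β_i effective nonzero and n_i ∈ ℤ, and set μ_i = n_i/(ω·β_i). If for all i, j the implications [Z(v_i) ⪯ Z(v_j) iff μ_i ≤ μ_j iff Z'(v_i) ⪯ Z'(v_j)] hold, then the Joyce transformation coefficient S({v₁,…,v_l}, Z, Z') equals 1 if l = 1 and 0 if l ≥ 2. -/
open scoped Classical

private lemma comb_lt' {a c p q t : ℚ} (hp : 0 < p) (hq : 0 < q)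
    (h1 : a / p ≤ t) (h2 : c / q < t) : (a + c) / (p + q) < t := by
  rw [div_le_iff₀ hp] at h1
  rw [div_lt_iff₀ hq] at h2
  rw [div_lt_iff₀ (by linarith)]
  linarith

private lemma comb_gt' {a c p q t : ℚ} (hp : 0 < p) (hq : 0 < q)
    (h1 : t ≤ a / p) (h2 : t < c / q) : t < (a + c) / (p + q) := by
  rw [le_div_iff₀ hp] at h1
  rw [lt_div_iff₀ hq] at h2
  rw [lt_div_iff₀ (by linarith)]
  linarith

private lemma medi_lt' {a c p q : ℚ} (hp : 0 < p) (hq : 0 < q) :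
    c / q < a / p ↔ (a + c) / (p + q) < a / p := by
  rw [div_lt_div_iff₀ hq hp, div_lt_div_iff₀ (by linarith) hp]
  constructor <;> intro h <;> nlinarith

private lemma medi_le' {a c p q : ℚ} (hp : 0 < p) (hq : 0 < q) :
    a / p ≤ c / q ↔ a / p ≤ (a + c) / (p + q) := by
  rw [div_le_div_iff₀ hp hq, div_le_div_iff₀ hp (by linarith)]
  constructor <;> intro h <;> nlinarith

/-- Joyce's coefficient `S({v₁,…,v_l}, Z, Z')` for classes `v_i` of pure one-dimensional
sheaves `(0,0,β_i,n_i)` with slopes `μ_i = n_i/(ω·β_i)`, when both `Z` and `Z'` induce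
the slope ordering (as for the stability conditions of Lemma 4.10 of Toda's paper):
`S = 1` if `l = 1` and `S = 0` if `l ≥ 2`. Here the prefix/suffix comparisons of
`Z'` are given by the weighted-average slopes. -/
theorem stmt_12 (l : ℕ) (hl : 1 ≤ l) (b nn : ℕ → ℚ) (hb : ∀ i < l, 0 < b i) :
    let μ : ℕ → ℚ := fun i => nn i / b i
    let slope : Finset ℕ → ℚ := fun s => (∑ i ∈ s, nn i) / (∑ i ∈ s, b i)
    -- condition (1): Z(v_i) ⪯ Z(v_{i+1}) and Z'(v₁+⋯+v_i) ≻ Z'(v_{i+1}+⋯+v_l)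
    let cond1 : ℕ → Prop := fun i =>
      μ i ≤ μ (i + 1) ∧ slope (Finset.Ico (i + 1) l) < slope (Finset.range (i + 1))
    -- condition (2): Z(v_i) ≻ Z(v_{i+1}) and Z'(v₁+⋯+v_i) ⪯ Z'(v_{i+1}+⋯+v_l)
    let cond2 : ℕ → Prop := fun i =>
      μ (i + 1) < μ i ∧ slope (Finset.range (i + 1)) ≤ slope (Finset.Ico (i + 1) l)
    let S : ℚ :=
      if ∀ i < l - 1, cond1 i ∨ cond2 i then
        (-1 : ℚ) ^ ((Finset.range (l - 1)).filter cond1).card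
      else 0
    (l = 1 → S = 1) ∧ (2 ≤ l → S = 0) := by
  intro μ slope cond1 cond2 S
  have key : 2 ≤ l → ¬ (∀ i < l - 1, cond1 i ∨ cond2 i) := by
    intro hl2 hall
    set N : ℕ → ℚ := fun k => ∑ i ∈ Finset.range k, nn i with hN
    set P : ℕ → ℚ := fun k => ∑ i ∈ Finset.range k, b i with hP
    set T : ℚ := N l / P l with hT
    have hPpos : ∀ k, 1 ≤ k → k ≤ l → 0 < P k := by
      intro k hk1 hk2
      apply Finset.sum_pos
      · intro i hi
        exact hb i (lt_of_lt_of_le (Finset.mem_range.mp hi) hk2)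
      · exact ⟨0, Finset.mem_range.mpr (by omega)⟩
    have hQpos : ∀ k, k < l → 0 < P l - P k := by
      intro k hk
      have : P l - P k = ∑ i ∈ Finset.Ico k l, b i := by
        rw [Finset.sum_Ico_eq_sub _ (le_of_lt hk)]
      rw [this]
      apply Finset.sum_pos
      · intro i hi
        exact hb i (Finset.mem_Ico.mp hi).2
      · exact ⟨k, Finset.mem_Ico.mpr ⟨le_refl _, hk⟩⟩
    -- translate the slope comparison to comparison with T
    have hIco : ∀ k, k ≤ l → slope (Finset.Ico k l) = (N l - N k) / (P l - P k) := by
      intro k hk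
      simp only [slope]
      rw [Finset.sum_Ico_eq_sub _ hk, Finset.sum_Ico_eq_sub _ hk]
    have hRange : ∀ k, slope (Finset.range k) = N k / P k := by
      intro k; rfl
    have hsum : ∀ k, N k + (N l - N k) = N l := by intro k; ring
    have hsumP : ∀ k, P k + (P l - P k) = P l := by intro k; ring
    have hC1 : ∀ k, k + 1 < l →
        (slope (Finset.Ico (k+1) l) < slope (Finset.range (k+1)) ↔ T < N (k+1) / P (k+1)) := by
      intro k hk
      rw [hIco (k+1) (by omega), hRange]
      have := medi_lt' (a := N (k+1)) (c := N l - N (k+1)) (p := P (k+1)) (q := P l - P (k+1))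
        (hPpos (k+1) (by omega) (by omega)) (hQpos (k+1) hk)
      rw [this, hsum, hsumP]
    have hC2 : ∀ k, k + 1 < l →
        (slope (Finset.range (k+1)) ≤ slope (Finset.Ico (k+1) l) ↔ N (k+1) / P (k+1) ≤ T) := by
      intro k hk
      rw [hIco (k+1) (by omega), hRange]
      have := medi_le' (a := N (k+1)) (c := N l - N (k+1)) (p := P (k+1)) (q := P l - P (k+1))
        (hPpos (k+1) (by omega) (by omega)) (hQpos (k+1) hk)
      rw [this, hsum, hsumP]
    have hNsucc : ∀ k, N (k+1) = N k + nn k := by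
      intro k; simp [hN, Finset.sum_range_succ]
    have hPsucc : ∀ k, P (k+1) = P k + b k := by
      intro k; simp [hP, Finset.sum_range_succ]
    have hμ : ∀ k, μ k = nn k / b k := fun k => rfl
    have inv : ∀ k, 1 ≤ k → k ≤ l - 1 →
        (T < N (k+1) / P (k+1) ∧ T < μ k) ∨ (N (k+1) / P (k+1) < T ∧ μ k < T) := by
      intro k
      induction k with
      | zero => omega
      | succ k ih =>
        intro _ hk2
        rcases Nat.eq_zero_or_pos k with hk0 | hkpos
        · subst hk0
          have h0 := hall 0 (by omega)
          have hA0 : N 1 / P 1 = μ 0 := by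
            rw [hNsucc, hPsucc]
            simp [hN, hP, hμ]
          rcases h0 with ⟨h1, h2⟩ | ⟨h1, h2⟩
          · rw [hC1 0 (by omega), hA0] at h2
            left
            have hμ1 : T < μ 1 := lt_of_lt_of_le h2 h1
            constructor
            · rw [hNsucc, hPsucc]
              exact comb_gt' (hPpos 1 le_rfl (by omega)) (hb 1 (by omega))
                (by rw [hA0]; exact le_of_lt h2) hμ1
            · exact hμ1
          · rw [hC2 0 (by omega), hA0] at h2
            right
            have hμ1 : μ 1 < T := lt_of_lt_of_le h1 h2
            constructor
            · rw [hNsucc, hPsucc]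
              exact comb_lt' (hPpos 1 le_rfl (by omega)) (hb 1 (by omega))
                (by rw [hA0]; exact h2) hμ1
            · exact hμ1
          
        · have ihh := ih hkpos (by omega)
          have hk := hall k (by omega)
          rcases ihh with ⟨hA, hμk⟩ | ⟨hA, hμk⟩
          · -- must be cond1 at k
            rcases hk with ⟨h1, h2⟩ | ⟨h1, h2⟩
            · left
              have hμ1 : T < μ (k+1) := lt_of_lt_of_le hμk h1
              constructor
              · rw [hNsucc (k+1), hPsucc (k+1)]
                exact comb_gt' (hPpos (k+1) (by omega) (by omega)) (hb (k+1) (by omega))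
                  (le_of_lt hA) hμ1
              · exact hμ1
            · rw [hC2 k (by omega)] at h2
              exact absurd h2 (not_le.mpr hA)
          · rcases hk with ⟨h1, h2⟩ | ⟨h1, h2⟩
            · rw [hC1 k (by omega)] at h2
              exact absurd h2 (not_lt.mpr (le_of_lt hA))
            · right
              have hμ1 : μ (k+1) < T := lt_trans h1 hμk
              constructor
              · rw [hNsucc (k+1), hPsucc (k+1)]
                exact comb_lt' (hPpos (k+1) (by omega) (by omega)) (hb (k+1) (by omega))
                  (le_of_lt hA) hμ1
              · exact hμ1
    have hfin := inv (l-1) (by omega) le_rfl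
    have hl1 : l - 1 + 1 = l := by omega
    rw [hl1] at hfin
    rcases hfin with ⟨h, _⟩ | ⟨h, _⟩ <;> exact lt_irrefl _ h
  constructor
  · intro h1
    subst h1
    have hcond : ∀ i < 1 - 1, cond1 i ∨ cond2 i := by intro i hi; omega
    simp [S, if_pos hcond]
  · intro h2
    simp [S, if_neg (key h2)]
end

section
/- Abstract version of Lemma 4.11: Let μ₁, …, μ_l be rational numbers with a distinguished index e, let k < 0 be real, and define S({v₁,…,v_l}) via the orderings: for i, j ≠ e, Z(v_i) ⪯ Z(v_j) iff μ_i ≤ μ_j and Z'(v_i) ⪯ Z'(v_j) iff μ_i ≤ μ_j; for i ≠ e, Z(v_i) ⪯ Z(v_e) iff μ_i ≤ -2k, and Z'(v_i) ⪯ Z'(v_e) iff μ_i ≤ 0; furthermore the partial sums behave so that Z'(v₁+⋯+v_i) ⪯ Z'(v_{i+1}+⋯+v_l) iff the weighted average slope of μ₁,…,μ_i is ≤ 0 when e > i, and analogously with ≻ when e ≤ i. Then the coefficient S({v₁,…,v_l}, Z, Z') is nonzero only if 0 < μ₁ ≤ μ₂ ≤ ⋯ ≤ μ_{e-1} ≤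 -2k > μ_{e+1} > ⋯ > μ_l ≥ 0, and in that case S = (-1)^{e-1}. -/
open scoped Classical

/-- Lemma (unless2) of Toda's paper, abstract version. Classes are indexed `1,…,l`
with a distinguished index `e` (the rank `-1` class); pure classes `i ≠ e` have weights
`b i = ω·β_i > 0` and `nn i = n_i`, with slopes `μ i = nn i / b i`. The `Z`-slope of a
subset containing `e` is `-2k` and its `Z'`-slope is `0`; a pure subset has slope given
by the weighted average. Then the coefficient `S({v₁,…,v_l}, Z, Z')` is nonzero only
if `0 < μ₁ ≤ … ≤ μ_{e-1} ≤ -2k > μ_{e+1} > … > μ_l ≥ 0`, in which case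
`S = (-1)^{e-1}`. -/
theorem stmt_13 (l e : ℕ) (hl : 1 ≤ l) (he1 : 1 ≤ e) (he2 : e ≤ l)
    (k : ℝ) (hk : k < 0) (b nn : ℕ → ℝ)
    (hb : ∀ i, 1 ≤ i → i ≤ l → i ≠ e → 0 < b i) :
    let μ : ℕ → ℝ := fun i => nn i / b i
    let slopeZ : Finset ℕ → ℝ := fun s =>
      if e ∈ s then -2 * k else (∑ i ∈ s, nn i) / (∑ i ∈ s, b i)
    let slopeZ' : Finset ℕ → ℝ := fun s =>
      if e ∈ s then 0 else (∑ i ∈ s, nn i) / (∑ i ∈ s, b i)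
    -- condition (1): Z(v_i) ⪯ Z(v_{i+1}) and Z'(v₁+⋯+v_i) ≻ Z'(v_{i+1}+⋯+v_l)
    let cond1 : ℕ → Prop := fun i =>
      slopeZ {i} ≤ slopeZ {i + 1} ∧
        slopeZ' (Finset.Icc (i + 1) l) < slopeZ' (Finset.Icc 1 i)
    -- condition (2): Z(v_i) ≻ Z(v_{i+1}) and Z'(v₁+⋯+v_i) ⪯ Z'(v_{i+1}+⋯+v_l)
    let cond2 : ℕ → Prop := fun i =>
      slopeZ {i + 1} < slopeZ {i} ∧
        slopeZ' (Finset.Icc 1 i) ≤ slopeZ' (Finset.Icc (i + 1) l)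
    let S : ℝ :=
      if ∀ i, 1 ≤ i → i ≤ l - 1 → cond1 i ∨ cond2 i then
        (-1 : ℝ) ^ ((Finset.Icc 1 (l - 1)).filter cond1).card
      else 0
    S ≠ 0 →
      ((∀ i, 1 ≤ i → i < e → 0 < μ i) ∧
       (∀ i, 1 ≤ i → i + 1 < e → μ i ≤ μ (i + 1)) ∧
       (∀ i, 1 ≤ i → i < e → μ i ≤ -2 * k) ∧
       (∀ i, e < i → i + 1 ≤ l → μ (i + 1) < μ i) ∧
       (∀ i, e < i → i ≤ l → μ i < -2 * k ∧ 0 ≤ μ i)) ∧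
      S = (-1 : ℝ) ^ (e - 1) := by
  intro μ slopeZ slopeZ' cond1 cond2 S hS
  obtain ⟨m, rfl⟩ : ∃ m, e = m + 1 := ⟨e - 1, by omega⟩
  set e := m + 1 with hedef
  by_cases H : ∀ i, 1 ≤ i → i ≤ l - 1 → cond1 i ∨ cond2 i
  swap
  · exact absurd (if_neg H) hS
  have hk2 : (0:ℝ) < -2 * k := by linarith
  -- singleton slopes
  have hZs : ∀ i : ℕ, i ≠ e → slopeZ {i} = μ i := by
    intro i hi
    show (if e ∈ ({i} : Finset ℕ) then -2*k else _) = _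
    rw [if_neg (by simpa using (Ne.symm hi)), Finset.sum_singleton, Finset.sum_singleton]
  have hZe : slopeZ {e} = -2 * k := by
    show (if e ∈ ({e} : Finset ℕ) then -2*k else _) = _
    rw [if_pos (Finset.mem_singleton_self e)]
  -- sums of b are positive
  have hbsum : ∀ a c : ℕ, 1 ≤ a → a ≤ c → c ≤ l → (e < a ∨ c < e) →
      0 < ∑ j ∈ Finset.Icc a c, b j := by
    intro a c ha hac hcl hec
    apply Finset.sum_pos
    · intro j hj
      rw [Finset.mem_Icc] at hj
      exact hb j (by omega) (by omega) (by omega)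
    · exact Finset.nonempty_Icc.2 hac
  -- slopeZ' formulas
  have hZ'0 : ∀ s, e ∈ s → slopeZ' s = 0 := by
    intro s hs
    show (if e ∈ s then (0:ℝ) else _) = _
    rw [if_pos hs]
  have hZ'L : ∀ i : ℕ, i < e → slopeZ' (Finset.Icc 1 i)
      = (∑ j ∈ Finset.Icc 1 i, nn j) / (∑ j ∈ Finset.Icc 1 i, b j) := by
    intro i hi
    show (if e ∈ Finset.Icc 1 i then (0:ℝ) else _) = _
    rw [if_neg (by rw [Finset.mem_Icc]; omega)]
  have hZ'R : ∀ i : ℕ, e ≤ i → slopeZ' (Finset.Icc (i+1) l)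
      = (∑ j ∈ Finset.Icc (i+1) l, nn j) / (∑ j ∈ Finset.Icc (i+1) l, b j) := by
    intro i hi
    show (if e ∈ Finset.Icc (i+1) l then (0:ℝ) else _) = _
    rw [if_neg (by rw [Finset.mem_Icc]; omega)]
  -- division sign helpers
  have dp : ∀ x y : ℝ, 0 < y → (0 < x / y ↔ 0 < x) := by
    intro x y hy; rw [lt_div_iff₀ hy]; simp
  have dnp : ∀ x y : ℝ, 0 < y → (x / y ≤ 0 ↔ x ≤ 0) := by
    intro x y hy; rw [div_le_iff₀ hy]; simp
  have dn : ∀ x y : ℝ, 0 < y → (x / y < 0 ↔ x < 0) := by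
    intro x y hy; rw [div_lt_iff₀ hy]; simp
  have dnn : ∀ x y : ℝ, 0 < y → (0 ≤ x / y ↔ 0 ≤ x) := by
    intro x y hy; rw [le_div_iff₀ hy]; simp
  have musign : ∀ i, 1 ≤ i → i ≤ l → i ≠ e →
      ((μ i < 0 ↔ nn i < 0) ∧ (0 < μ i ↔ 0 < nn i) ∧ (μ i ≤ 0 ↔ nn i ≤ 0) ∧ (0 ≤ μ i ↔ 0 ≤ nn i)) := by
    intro i h1 h2 h3
    have hbi := hb i h1 h2 h3
    exact ⟨dn _ _ hbi, dp _ _ hbi, dnp _ _ hbi, dnn _ _ hbi⟩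
  -- sum splitting
  have splitTop : ∀ (f : ℕ → ℝ) (i : ℕ),
      ∑ j ∈ Finset.Icc 1 (i+1), f j = (∑ j ∈ Finset.Icc 1 i, f j) + f (i+1) := by
    intro f i
    rw [show Finset.Icc 1 (i+1) = insert (i+1) (Finset.Icc 1 i) by
          ext x; simp only [Finset.mem_Icc, Finset.mem_insert]; omega,
        Finset.sum_insert (by simp [Finset.mem_Icc])]
    ring
  have splitBot : ∀ (f : ℕ → ℝ) (i : ℕ), i + 1 ≤ l →
      ∑ j ∈ Finset.Icc (i+1) l, f j = f (i+1) + ∑ j ∈ Finset.Icc (i+2) l, f j := by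
    intro f i hi
    rw [show Finset.Icc (i+1) l = insert (i+1) (Finset.Icc (i+2) l) by
          ext x; simp only [Finset.mem_Icc, Finset.mem_insert]; omega,
        Finset.sum_insert (by simp [Finset.mem_Icc])]
  -- characterization on the left of e
  have charL : ∀ i, 1 ≤ i → i < e →
      ((cond1 i ↔ (slopeZ {i} ≤ slopeZ {i+1} ∧ 0 < ∑ j ∈ Finset.Icc 1 i, nn j)) ∧
       (cond2 i ↔ (slopeZ {i+1} < slopeZ {i} ∧ ∑ j ∈ Finset.Icc 1 i, nn j ≤ 0))) := by
    intro i h1 h2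
    have hd := hbsum 1 i le_rfl h1 (by omega) (Or.inr h2)
    have e1 : slopeZ' (Finset.Icc (i+1) l) = 0 := hZ'0 _ (by rw [Finset.mem_Icc]; omega)
    have e2 := hZ'L i h2
    have hiff : (cond1 i ↔ (slopeZ {i} ≤ slopeZ {i+1} ∧
        slopeZ' (Finset.Icc (i+1) l) < slopeZ' (Finset.Icc 1 i))) ∧
        (cond2 i ↔ (slopeZ {i+1} < slopeZ {i} ∧
        slopeZ' (Finset.Icc 1 i) ≤ slopeZ' (Finset.Icc (i+1) l))) := ⟨Iff.rfl, Iff.rfl⟩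
    rw [hiff.1, hiff.2, e1, e2, dp _ _ hd, dnp _ _ hd]
    exact ⟨Iff.rfl, Iff.rfl⟩
  -- characterization at and right of e
  have charR : ∀ i, e ≤ i → i + 1 ≤ l →
      ((cond1 i ↔ (slopeZ {i} ≤ slopeZ {i+1} ∧ ∑ j ∈ Finset.Icc (i+1) l, nn j < 0)) ∧
       (cond2 i ↔ (slopeZ {i+1} < slopeZ {i} ∧ 0 ≤ ∑ j ∈ Finset.Icc (i+1) l, nn j))) := by
    intro i h1 h2
    have hd := hbsum (i+1) l (by omega) h2 le_rfl (Or.inl (by omega))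
    have e1 : slopeZ' (Finset.Icc 1 i) = 0 := hZ'0 _ (by rw [Finset.mem_Icc]; omega)
    have e2 := hZ'R i h1
    have hiff : (cond1 i ↔ (slopeZ {i} ≤ slopeZ {i+1} ∧
        slopeZ' (Finset.Icc (i+1) l) < slopeZ' (Finset.Icc 1 i))) ∧
        (cond2 i ↔ (slopeZ {i+1} < slopeZ {i} ∧
        slopeZ' (Finset.Icc 1 i) ≤ slopeZ' (Finset.Icc (i+1) l))) := ⟨Iff.rfl, Iff.rfl⟩
    rw [hiff.1, hiff.2, e1, e2, dn _ _ hd, dnn _ _ hd]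
    exact ⟨Iff.rfl, Iff.rfl⟩
  -- upward induction
  have up : ∀ i, i ≤ m →
      ((∀ j, 1 ≤ j → j ≤ i → cond1 j ∧ 0 < μ j) ∧
       (∀ j, 1 ≤ j → j + 1 ≤ i → μ j ≤ μ (j+1)) ∧
       (1 ≤ i → 0 < ∑ j ∈ Finset.Icc 1 i, nn j))
      ∨ (1 ≤ i ∧ (∀ j, 1 ≤ j → j ≤ i → cond2 j ∧ μ j ≤ 0) ∧
         ∑ j ∈ Finset.Icc 1 i, nn j ≤ 0) := by
    intro i
    induction i with
    | zero =>
      intro _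
      exact Or.inl ⟨fun j h1 h2 => absurd h2 (by omega),
        fun j h1 h2 => absurd h2 (by omega), fun h => absurd h (by omega)⟩
    | succ i ih =>
      intro hie
      have hlt : i + 1 < e := by omega
      have hcc := H (i+1) (by omega) (by omega)
      have hch := charL (i+1) (by omega) hlt
      have hs1 : slopeZ {i+1} = μ (i+1) := hZs (i+1) (by omega)
      rcases ih (by omega) with good | bad
      · rcases hcc with c1 | c2
        · left
          have hc := hch.1.1 c1
          have hmu1 : 0 < μ (i+1) := by
            rcases Nat.eq_zero_or_pos i with h0 | hpos
            · subst h0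
              have : (0:ℝ) < nn 1 := by
                have := hc.2; rwa [Finset.Icc_self, Finset.sum_singleton] at this
              exact ((musign 1 le_rfl (by omega) (by omega)).2.1).2 this
            · have hci := good.1 i hpos le_rfl
              have hf : slopeZ {i} ≤ slopeZ {i+1} := hci.1.1
              rw [hZs i (by omega), hs1] at hf
              linarith [hci.2]
          refine ⟨?_, ?_, fun _ => hc.2⟩
          · intro j hj1 hj2
            rcases Nat.lt_or_ge j (i+1) with hj | hj
            · exact good.1 j hj1 (by omega)
            · have : j = i + 1 := by omega
              subst this
              exact ⟨c1, hmu1⟩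
          · intro j hj1 hj2
            rcases Nat.lt_or_ge (j+1) (i+1) with hj | hj
            · exact good.2.1 j hj1 (by omega)
            · have : j = i := by omega
              subst this
              have hci := good.1 j hj1 le_rfl
              have hf : slopeZ {j} ≤ slopeZ {j+1} := hci.1.1
              rwa [hZs j (by omega), hZs (j+1) (by omega)] at hf
        · -- cond2 at i+1 after good
          have hc := hch.2.1 c2
          rcases Nat.eq_zero_or_pos i with h0 | hpos
          · subst h0
            right
            have hnn1 : nn 1 ≤ 0 := by
              have := hc.2; rwa [Finset.Icc_self, Finset.sum_singleton] at this
            refine ⟨le_rfl, ?_, hc.2⟩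
            intro j hj1 hj2
            have : j = 1 := by omega
            subst this
            exact ⟨c2, ((musign 1 le_rfl (by omega) (by omega)).2.2.1).2 hnn1⟩
          · exfalso
            have hsum := good.2.2 hpos
            have hnn1 : nn (i+1) < 0 := by
              have := splitTop nn i
              have h2 := hc.2
              linarith
            have hmu1 : μ (i+1) < 0 :=
              ((musign (i+1) (by omega) (by omega) (by omega)).1).2 hnn1
            have hci := good.1 i hpos le_rfl
            have hf : slopeZ {i} ≤ slopeZ {i+1} := hci.1.1
            rw [hZs i (by omega), hs1] at hf
            linarith [hci.2]
      · -- bad propagates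
        right
        obtain ⟨hi1, hbad, hsum⟩ := bad
        have hcibad := hbad i hi1 le_rfl
        have hf : slopeZ {i+1} < slopeZ {i} := hcibad.1.1
        rw [hZs i (by omega), hs1] at hf
        have hmu1 : μ (i+1) < 0 := lt_of_lt_of_le hf hcibad.2
        have hnn1 : nn (i+1) < 0 :=
          ((musign (i+1) (by omega) (by omega) (by omega)).1).1 hmu1
        have hsum' : ∑ j ∈ Finset.Icc 1 (i+1), nn j ≤ 0 := by
          rw [splitTop nn i]; linarith
        have c2 : cond2 (i+1) := by
          rcases hcc with c1 | c2
          · exfalso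
            have := (hch.1.1 c1).2
            linarith
          · exact c2
        refine ⟨by omega, ?_, hsum'⟩
        intro j hj1 hj2
        rcases Nat.lt_or_ge j (i+1) with hj | hj
        · exact hbad j hj1 (by omega)
        · have : j = i + 1 := by omega
          subst this
          exact ⟨c2, le_of_lt hmu1⟩
  -- resolve upward: good on the left
  have gU : (∀ j, 1 ≤ j → j ≤ m → cond1 j ∧ 0 < μ j) ∧
      (∀ j, 1 ≤ j → j + 1 ≤ m → μ j ≤ μ (j+1)) ∧
      (1 ≤ m → 0 < ∑ j ∈ Finset.Icc 1 m, nn j) := by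
    rcases up m le_rfl with good | bad
    · exact good
    · exfalso
      obtain ⟨hm1, hbad, _⟩ := bad
      have hcm := hbad m hm1 le_rfl
      have hf : slopeZ {m+1} < slopeZ {m} := hcm.1.1
      rw [hZe, hZs m (by omega)] at hf
      linarith [hcm.2]
  -- downward induction
  have down : ∀ d i, i + d = l → e ≤ i →
      ((∀ j, i ≤ j → j + 1 ≤ l → cond2 j) ∧
       (∀ j, i < j → j + 1 ≤ l → μ (j+1) < μ j) ∧
       (∀ j, i < j → j ≤ l → 0 ≤ μ j) ∧
       0 ≤ ∑ j ∈ Finset.Icc (i+1) l, nn j)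
      ∨ (i + 1 ≤ l ∧ (∀ j, i ≤ j → j + 1 ≤ l → cond1 j) ∧
         (∀ j, i < j → j ≤ l → μ j < 0) ∧ ∑ j ∈ Finset.Icc (i+1) l, nn j < 0) := by
    intro d
    induction d with
    | zero =>
      intro i hil hei
      have : i = l := by omega
      subst this
      left
      refine ⟨fun j h1 h2 => absurd h2 (by omega), fun j h1 h2 => absurd h2 (by omega),
        fun j h1 h2 => absurd h1 (by omega), ?_⟩
      rw [Finset.Icc_eq_empty (by omega), Finset.sum_empty]
    | succ d ih =>
      intro i hil hei
      have hil2 : i + 1 ≤ l := by omega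
      have hD := ih (i+1) (by omega) (by omega)
      have hcc := H i (by omega) (by omega)
      have hch := charR i hei hil2
      have hs2 : slopeZ {i+1} = μ (i+1) := hZs (i+1) (by omega)
      rcases hD with good | bad
      · rcases hcc with c1 | c2
        · -- cond1 after good: contradiction unless i+1 = l
          have hc := hch.1.1 c1
          have hnn1 : nn (i+1) < 0 := by
            have hsp := splitBot nn i hil2
            have := good.2.2.2
            linarith [hc.2]
          have hmu1 : μ (i+1) < 0 :=
            ((musign (i+1) (by omega) hil2 (by omega)).1).2 hnn1
          rcases Nat.lt_or_ge (i+1) l with hlt | hge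
          · exfalso
            have hc2' := good.1 (i+1) le_rfl (by omega)
            have hf := ((charR (i+1) (by omega) (by omega)).2.1 hc2').1
            rw [hZs (i+1) (by omega), hZs (i+2) (by omega)] at hf
            have h0 := good.2.2.1 (i+2) (by omega) (by omega)
            linarith
          · right
            refine ⟨hil2, ?_, ?_, hc.2⟩
            · intro j hj1 hj2
              have : j = i := by omega
              subst this
              exact c1
            · intro j hj1 hj2
              have : j = i + 1 := by omega
              subst this
              exact hmu1
        · -- cond2: good extends
          left
          have hc := hch.2.1 c2
          have hmu1 : 0 ≤ μ (i+1) := by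
            rcases Nat.lt_or_ge (i+1) l with hlt | hge
            · have hc2' := good.1 (i+1) le_rfl (by omega)
              have hf := ((charR (i+1) (by omega) (by omega)).2.1 hc2').1
              rw [hZs (i+1) (by omega), hZs (i+2) (by omega)] at hf
              have h0 := good.2.2.1 (i+2) (by omega) (by omega)
              linarith
            · have : i + 1 = l := by omega
              have hsum := hc.2
              rw [show Finset.Icc (i+1) l = {i+1} by rw [Finset.Icc_eq_singleton_iff]; omega,
                Finset.sum_singleton] at hsum
              exact ((musign (i+1) (by omega) hil2 (by omega)).2.2.2).2 hsum
          refine ⟨?_, ?_, ?_, hc.2⟩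
          · intro j hj1 hj2
            rcases Nat.lt_or_ge i j with hj | hj
            · exact good.1 j (by omega) hj2
            · have : j = i := by omega
              subst this
              exact c2
          · intro j hj1 hj2
            rcases Nat.lt_or_ge (i+1) j with hj | hj
            · exact good.2.1 j (by omega) hj2
            · have : j = i + 1 := by omega
              subst this
              have hc2' := good.1 (i+1) le_rfl hj2
              have hf := ((charR (i+1) (by omega) (by omega)).2.1 hc2').1
              rwa [hZs (i+1) (by omega), hZs (i+2) (by omega)] at hf
          · intro j hj1 hj2
            rcases Nat.lt_or_ge (i+1) j with hj | hj
            · exact good.2.2.1 j (by omega) hj2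
            · have : j = i + 1 := by omega
              subst this
              exact hmu1
      · -- bad propagates downward
        obtain ⟨hl1, hbad, hneg, hsum⟩ := bad
        have hc1' := hbad (i+1) le_rfl hl1
        have hf := ((charR (i+1) (by omega) hl1).1.1 hc1').1
        rw [hZs (i+1) (by omega), hZs (i+2) (by omega)] at hf
        have hmu2 := hneg (i+2) (by omega) (by omega)
        have hmu1 : μ (i+1) < 0 := lt_of_le_of_lt hf hmu2
        have hnn1 : nn (i+1) < 0 :=
          ((musign (i+1) (by omega) hil2 (by omega)).1).1 hmu1
        have hsum' : ∑ j ∈ Finset.Icc (i+1) l, nn j < 0 := by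
          rw [splitBot nn i hil2]; linarith
        have c1 : cond1 i := by
          rcases hcc with c1 | c2
          · exact c1
          · exfalso
            have := (hch.2.1 c2).2
            linarith
        right
        refine ⟨hil2, ?_, ?_, hsum'⟩
        · intro j hj1 hj2
          rcases Nat.lt_or_ge i j with hj | hj
          · exact hbad j (by omega) hj2
          · have : j = i := by omega
            subst this
            exact c1
        · intro j hj1 hj2
          rcases Nat.lt_or_ge (i+1) j with hj | hj
          · exact hneg j (by omega) hj2
          · have : j = i + 1 := by omega
            subst this
            exact hmu1
  -- resolve downward
  have gD : (∀ j, e ≤ j → j + 1 ≤ l → cond2 j) ∧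
      (∀ j, e < j → j + 1 ≤ l → μ (j+1) < μ j) ∧
      (∀ j, e < j → j ≤ l → 0 ≤ μ j) ∧
      0 ≤ ∑ j ∈ Finset.Icc (e+1) l, nn j := by
    rcases down (l - e) e (by omega) le_rfl with good | bad
    · exact good
    · exfalso
      obtain ⟨hl1, hbad, hneg, _⟩ := bad
      have hce := hbad e le_rfl hl1
      have hf : slopeZ {e} ≤ slopeZ {e+1} := hce.1
      rw [hZe, hZs (e+1) (by omega)] at hf
      have := hneg (e+1) (by omega) (by omega)
      linarith
  -- chains
  have chainUp : ∀ jj, jj ≤ m → ∀ i, 1 ≤ i → i ≤ jj → μ i ≤ μ jj := by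
    intro jj
    induction jj with
    | zero => intro _ i h1 h2; omega
    | succ jj ih =>
      intro hm i h1 h2
      rcases Nat.lt_or_ge i (jj+1) with hj | hj
      · have h3 : 1 ≤ jj := by omega
        exact le_trans (ih (by omega) i h1 (by omega)) (gU.2.1 jj h3 hm)
      · have : i = jj + 1 := by omega
        subst this
        exact le_rfl
  have chainDown : ∀ j, e + 1 ≤ j → j ≤ l → μ j ≤ μ (e+1) := by
    intro j
    induction j with
    | zero => intro h1 h2; omega
    | succ j ih =>
      intro h1 h2
      rcases Nat.lt_or_ge (e+1) (j+1) with hj | hj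
      · have := gD.2.1 j (by omega) (by omega)
        exact le_trans (le_of_lt this) (ih (by omega) (by omega))
      · have : j + 1 = e + 1 := by omega
        rw [this]
  have hmu_top : 1 ≤ m → μ m ≤ -2 * k := by
    intro hm1
    have hcm := (gU.1 m hm1 le_rfl).1
    have hf : slopeZ {m} ≤ slopeZ {m+1} := hcm.1
    rwa [hZe, hZs m (by omega)] at hf
  have hmu_bot : e + 1 ≤ l → μ (e+1) < -2 * k := by
    intro hel
    have hce := gD.1 e le_rfl hel
    have hf : slopeZ {e+1} < slopeZ {e} := hce.1
    rwa [hZe, hZs (e+1) (by omega)] at hf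
  -- the filter
  have hfil : (Finset.Icc 1 (l-1)).filter cond1 = Finset.Icc 1 m := by
    ext j
    simp only [Finset.mem_filter, Finset.mem_Icc]
    constructor
    · rintro ⟨⟨hj1, hj2⟩, hc⟩
      refine ⟨hj1, ?_⟩
      by_contra hcon
      have hc2 := gD.1 j (by omega) (by omega)
      have h1 : slopeZ {j} ≤ slopeZ {j+1} := hc.1
      have h2 : slopeZ {j+1} < slopeZ {j} := hc2.1
      linarith
    · rintro ⟨hj1, hj2⟩
      exact ⟨⟨hj1, by omega⟩, (gU.1 j hj1 hj2).1⟩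
  have hSval : S = (-1:ℝ) ^ (e - 1) := by
    have h1 : S = (-1:ℝ) ^ ((Finset.Icc 1 (l-1)).filter cond1).card := if_pos H
    rw [h1, hfil, Nat.card_Icc]
  refine ⟨⟨?_, ?_, ?_, ?_, ?_⟩, hSval⟩
  · intro i h1 h2
    exact (gU.1 i h1 (by omega)).2
  · intro i h1 h2
    exact gU.2.1 i h1 (by omega)
  · intro i h1 h2
    have him : i ≤ m := by omega
    exact le_trans (chainUp m (le_refl m) i h1 him) (hmu_top (by omega))
  · intro i h1 h2
    exact gD.2.1 i h1 h2
  · intro i h1 h2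
    refine ⟨?_, gD.2.2.1 i h1 h2⟩
    exact lt_of_le_of_lt (chainDown i h1 h2) (hmu_bot (by omega))
end
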